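/- For every nonnegative integer n and every real t with 0 < t < 1/4, one has (-1)^{n+1} B_{2n}(t) < |B_{2n}| \cos(2\pi t), where B_{2n} is the 2n-th Bernoulli number. -/

import Mathlib

open Set Real Filter

noncomputable def B (n : ℕ) (t : ℝ) : ℝ := Polynomial.aeval t (Polynomial.bernoulli n)

noncomputable def Bnum (n : ℕ) : ℝ := ((bernoulli n : ℚ) : ℝ)

open Nat

set_option maxHeartbeats 1000000

lemma cos_mem' {t : ℝ} (ht : 0 < t) (ht2 : t < 1/4) :
    0 < Real.cos (2*π*t) ∧ Real.cos (2*π*t) < 1 := by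
  have hπ := Real.pi_pos
  constructor
  · apply Real.cos_pos_of_mem_Ioo
    constructor <;> nlinarith
  · rcases lt_or_eq_of_le (Real.cos_le_one (2*π*t)) with h | h
    · exact h
    · exfalso
      have := (Real.cos_eq_one_iff_of_lt_of_lt (x := 2*π*t) (by nlinarith) (by nlinarith)).mp h
      nlinarith

lemma poly1' {c T : ℝ} (hc0 : 0 < c) (hc1 : c < 1) (hT : T < 31/144) :
    (0:ℝ) < (c * (1/4) - (1/4) * (2*c^2-1)) + (c * (1/9) - (1/9)*(4*c^3-3*c))
      + (c * (1/16) - (1/16)*(2*(2*c^2-1)^2-1)) + (c * (1/25) - (1/25)*(16*c^5-20*c^3+5*c))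
      + (c * (1/36) - (1/36)*(2*(4*c^3-3*c)^2-1)) + (c-1)*T := by
  have p1 : (0:ℝ) ≤ (1-c)*c := by nlinarith
  have p2 : (0:ℝ) ≤ (1-c)*c^2 := by nlinarith
  have p3 : (0:ℝ) ≤ (1-c)*c^3 := by nlinarith [pow_nonneg hc0.le 3]
  have p4 : (0:ℝ) ≤ (1-c)*c^4 := by nlinarith [pow_nonneg hc0.le 4]
  have p5 : (0:ℝ) ≤ (1-c)*c^5 := by nlinarith [pow_nonneg hc0.le 5]
  nlinarith [mul_pos (sub_pos.2 hc1) (sub_pos.2 hT)]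

lemma poly2' {c T q r w : ℝ} (hc0 : 0 < c) (hc1 : c < 1) (hT0 : 0 ≤ T) (hT1 : T < 1)
    (hq : 16 ≤ q) (hw : 0 < w) (hr : 0 < r) (hqr : q*q = 16*r) :
    (0:ℝ) < (c * (1/q) - (1/q)*(2*c^2-1)) + (c * w - w*(4*c^3-3*c)) + (c-1)*((1/r)*T) := by
  have hq0 : (0:ℝ) < q := by linarith
  have h3 : (0:ℝ) ≤ c * w - w*(4*c^3-3*c) := by
    nlinarith [mul_nonneg (mul_nonneg (mul_nonneg hw.le hc0.le) (by linarith : (0:ℝ) ≤ 1-c)) (by linarith : (0:ℝ) ≤ 1+c)]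
  have e : (1:ℝ)/r = 16/(q*q) := by rw [hqr]; field_simp
  have key : (1-c)*(16/(q*q))*T < (1/q)*(1+c-2*c^2) := by
    have h1 : (1-c)*(16/(q*q))*T = ((1-c)*16*T)/(q*q) := by ring
    have h2 : (1/q)*(1+c-2*c^2) = ((1+c-2*c^2)*q)/(q*q) := by field_simp
    rw [h1, h2, div_lt_div_iff₀ (by positivity) (by positivity)]
    have k1 : (0:ℝ) < (1-c)*(1-T) := mul_pos (by linarith) (by linarith)
    have k2 : (0:ℝ) ≤ (1-c)*(q-16) := mul_nonneg (by linarith) (by linarith)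
    have k3 : (0:ℝ) ≤ c*(1-c)*q := mul_nonneg (mul_nonneg hc0.le (by linarith)) hq0.le
    have k4 : (0:ℝ) ≤ (1-c)*(q-16)*T := mul_nonneg k2 hT0
    nlinarith [k1, k2, k3, k4]
  rw [e]
  nlinarith [key, h3]

lemma tail_ge' {m K0 : ℕ} {c t T : ℝ}
    (hT : HasSum (fun i : ℕ => 1 / ((i + K0 : ℕ) : ℝ) ^ (2*m)) T) :
    (c - 1) * T ≤ ∑' i : ℕ, (c * (1 / ((i + K0 : ℕ) : ℝ) ^ (2*m))
        - 1 / ((i + K0 : ℕ) : ℝ) ^ (2*m) * Real.cos (2*π*((i + K0 : ℕ) : ℝ)*t)) := by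
  have hsum2 : Summable (fun i : ℕ => (c * (1 / ((i + K0 : ℕ) : ℝ) ^ (2*m))
      - 1 / ((i + K0 : ℕ) : ℝ) ^ (2*m) * Real.cos (2*π*((i + K0 : ℕ) : ℝ)*t))) := by
    apply Summable.sub (hT.summable.mul_left c)
    apply Summable.of_norm
    apply Summable.of_nonneg_of_le (fun i => norm_nonneg _) _ hT.summable
    intro i
    rw [Real.norm_eq_abs, abs_mul]
    have h1 : (0:ℝ) ≤ 1 / ((i + K0 : ℕ) : ℝ) ^ (2*m) := by positivity
    rw [abs_of_nonneg h1]
    have := Real.abs_cos_le_one (2*π*((i + K0 : ℕ) : ℝ)*t)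
    nlinarith
  calc (c - 1) * T = ∑' i : ℕ, (c - 1) * (1 / ((i + K0 : ℕ) : ℝ) ^ (2*m)) := by
        rw [tsum_mul_left, hT.tsum_eq]
    _ ≤ _ := by
        apply Summable.tsum_le_tsum _ (hT.summable.mul_left _) hsum2
        intro i
        have h1 : (0:ℝ) ≤ 1 / ((i + K0 : ℕ) : ℝ) ^ (2*m) := by positivity
        have := Real.cos_le_one (2*π*((i + K0 : ℕ) : ℝ)*t)
        nlinarith

lemma core' {m : ℕ} (hm : m ≠ 0) {t : ℝ} (ht : 0 < t) (ht2 : t < 1/4) :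
    ((-1 : ℝ) ^ (m + 1) * (2 * π) ^ (2 * m) / 2 / (2 * m)! *
        (Polynomial.map (algebraMap ℚ ℝ) (Polynomial.bernoulli (2 * m))).eval t)
    < Real.cos (2*π*t) *
      ((-1 : ℝ) ^ (m + 1) * (2 : ℝ) ^ (2 * m - 1) * π ^ (2 * m) * ((bernoulli (2 * m) : ℚ) : ℝ) / (2 * m)!) := by
  obtain ⟨hc0, hc1⟩ := cos_mem' ht ht2
  have hA := hasSum_one_div_nat_pow_mul_cos hm (x := t) ⟨ht.le, by linarith⟩
  have hZ := hasSum_zeta_nat (k := m) hm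
  rw [← sub_pos]
  set c := Real.cos (2*π*t) with hcdef
  set A := ((-1 : ℝ) ^ (m + 1) * (2 * π) ^ (2 * m) / 2 / (2 * m)! *
        (Polynomial.map (algebraMap ℚ ℝ) (Polynomial.bernoulli (2 * m))).eval t) with hAdef
  set Z := ((-1 : ℝ) ^ (m + 1) * (2 : ℝ) ^ (2 * m - 1) * π ^ (2 * m) * ((bernoulli (2 * m) : ℚ) : ℝ) / (2 * m)!) with hZdef
  have hS : HasSum (fun k : ℕ => c * (1/(k:ℝ)^(2*m)) - 1/(k:ℝ)^(2*m) * Real.cos (2*π*(k:ℝ)*t))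
      (c * Z - A) := (hZ.mul_left c).sub hA
  have hπ1 : π < 3.15 := pi_lt_d2
  have hπ2 : 3.14 < π := pi_gt_d2
  have hTlt : π^2/6 - 5369/3600 < 31/144 := by nlinarith
  have hT40 : (0:ℝ) ≤ π^2/6 - 49/36 := by nlinarith
  have hT41 : π^2/6 - 49/36 < 1 := by nlinarith
  have e1 : Real.cos (2*π*(1:ℝ)*t) = c := by rw [show (2*π*(1:ℝ)*t) = 2*π*t by ring]
  have e2 : Real.cos (2*π*(2:ℝ)*t) = 2*c^2 - 1 := by
    rw [show (2*π*(2:ℝ)*t) = 2*(2*π*t) by ring, Real.cos_two_mul]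
  have e3 : Real.cos (2*π*(3:ℝ)*t) = 4*c^3 - 3*c := by
    rw [show (2*π*(3:ℝ)*t) = 3*(2*π*t) by ring, Real.cos_three_mul]
  rcases Nat.lt_or_ge m 2 with hm2 | hm2
  · -- m = 1
    interval_cases m
    · exact absurd rfl hm
    · have hsum7 : ∑ i ∈ Finset.range 7, (1:ℝ)/((i:ℝ))^2 = 5369/3600 := by
        simp [Finset.sum_range_succ]; norm_num
      have hT7 : HasSum (fun i : ℕ => 1 / ((i + 7 : ℕ) : ℝ) ^ (2*1)) (π^2/6 - 5369/3600) := by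
        have h2 : HasSum (fun i : ℕ => (1:ℝ)/(((i+7:ℕ)):ℝ)^2) (π^2/6 - 5369/3600) := by
          rw [hasSum_nat_add_iff (f := fun n : ℕ => (1:ℝ)/(n:ℝ)^2) 7, hsum7]
          convert hasSum_zeta_two using 1; rfl; ring
        convert h2 using 2
      have htail := tail_ge' (c := c) (t := t) hT7
      have hsplit := Summable.sum_add_tsum_nat_add
        (f := fun k : ℕ => c * (1/(k:ℝ)^(2*1)) - 1/(k:ℝ)^(2*1) * Real.cos (2*π*(k:ℝ)*t)) 7 hS.summable
      rw [hS.tsum_eq] at hsplit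
      have e4 : Real.cos (2*π*(4:ℝ)*t) = 2*(2*c^2-1)^2 - 1 := by
        rw [show (2*π*(4:ℝ)*t) = 2*(2*(2*π*t)) by ring, Real.cos_two_mul, Real.cos_two_mul]
      have e6 : Real.cos (2*π*(6:ℝ)*t) = 2*(4*c^3-3*c)^2 - 1 := by
        rw [show (2*π*(6:ℝ)*t) = 2*(3*(2*π*t)) by ring, Real.cos_two_mul, Real.cos_three_mul]
      have hsin : Real.sin (2*π*t)^2 = 1 - c^2 := Real.sin_sq _
      have e5 : Real.cos (2*π*(5:ℝ)*t) = 16*c^5 - 20*c^3 + 5*c := by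
        rw [show (2*π*(5:ℝ)*t) = 3*(2*π*t)+2*(2*π*t) by ring, Real.cos_add, Real.cos_three_mul,
          Real.cos_two_mul, Real.sin_three_mul, Real.sin_two_mul]
        linear_combination (8*c*(Real.sin (2*π*t))^2 + 8*c*(1-c^2) - 6*c) * hsin
      have hsum : ∑ i ∈ Finset.range 7,
          (c * (1/(i:ℝ)^(2*1)) - 1/(i:ℝ)^(2*1) * Real.cos (2*π*(i:ℝ)*t))
          = (c * (1/4) - (1/4) * (2*c^2-1)) + (c * (1/9) - (1/9)*(4*c^3-3*c))
            + (c * (1/16) - (1/16)*(2*(2*c^2-1)^2-1)) + (c * (1/25) - (1/25)*(16*c^5-20*c^3+5*c))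
            + (c * (1/36) - (1/36)*(2*(4*c^3-3*c)^2-1)) := by
        simp only [Finset.sum_range_succ, Finset.sum_range_zero]
        push_cast
        rw [e1, e2, e3, e4, e5, e6]
        norm_num
      rw [hsum] at hsplit
      have key := poly1' hc0 hc1 hTlt
      linarith
  · -- m ≥ 2
    have hsum4 : ∑ i ∈ Finset.range 4, (1:ℝ)/((i:ℝ))^2 = 49/36 := by
      simp [Finset.sum_range_succ]; norm_num
    have hT4 : HasSum (fun i : ℕ => (1:ℝ)/(((i+4:ℕ)):ℝ)^2) (π^2/6 - 49/36) := by
      rw [hasSum_nat_add_iff (f := fun n : ℕ => (1:ℝ)/(n:ℝ)^2) 4, hsum4]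
      convert hasSum_zeta_two using 1; rfl; ring
    have hTm := ((summable_nat_add_iff (f := fun n : ℕ => 1/(n:ℝ)^(2*m)) 4).mpr hZ.summable).hasSum
    have hptw : ∀ i : ℕ, 1/(((i+4:ℕ)):ℝ)^(2*m) ≤ (1/(16:ℝ)^(m-1)) * ((1:ℝ)/(((i+4:ℕ)):ℝ)^2) := by
      intro i
      have hx4 : (4:ℝ) ≤ ((i+4:ℕ):ℝ) := by push_cast; linarith [Nat.cast_nonneg (α := ℝ) i]
      have hxp : (0:ℝ) < ((i+4:ℕ):ℝ) := by linarith
      have hpow : ((i+4:ℕ):ℝ)^(2*m) = (((i+4:ℕ):ℝ)^2)^(m-1) * ((i+4:ℕ):ℝ)^2 := by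
        rw [← pow_mul, ← pow_add]; congr 1; omega
      have h16 : (16:ℝ)^(m-1) ≤ (((i+4:ℕ):ℝ)^2)^(m-1) := by
        apply pow_le_pow_left₀ (by norm_num)
        nlinarith
      calc 1/(((i+4:ℕ)):ℝ)^(2*m) ≤ 1/((16:ℝ)^(m-1) * ((i+4:ℕ):ℝ)^2) := by
            apply one_div_le_one_div_of_le (by positivity)
            rw [hpow]
            exact mul_le_mul_of_nonneg_right h16 (by positivity)
        _ = (1/(16:ℝ)^(m-1)) * ((1:ℝ)/(((i+4:ℕ)):ℝ)^2) := by rw [one_div_mul_one_div]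
    have hTmle : (∑' i : ℕ, 1/(((i+4:ℕ)):ℝ)^(2*m)) ≤ (1/(16:ℝ)^(m-1)) * (π^2/6 - 49/36) := by
      calc (∑' i : ℕ, 1/(((i+4:ℕ)):ℝ)^(2*m))
          ≤ ∑' i : ℕ, (1/(16:ℝ)^(m-1)) * ((1:ℝ)/(((i+4:ℕ)):ℝ)^2) :=
            Summable.tsum_le_tsum hptw hTm.summable (hT4.summable.mul_left _)
        _ = (1/(16:ℝ)^(m-1)) * (π^2/6 - 49/36) := by rw [tsum_mul_left, hT4.tsum_eq]
    have htail := tail_ge' (c := c) (t := t) hTm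
    have hsplit := Summable.sum_add_tsum_nat_add
      (f := fun k : ℕ => c * (1/(k:ℝ)^(2*m)) - 1/(k:ℝ)^(2*m) * Real.cos (2*π*(k:ℝ)*t)) 4 hS.summable
    rw [hS.tsum_eq] at hsplit
    have hsum : ∑ i ∈ Finset.range 4,
        (c * (1/(i:ℝ)^(2*m)) - 1/(i:ℝ)^(2*m) * Real.cos (2*π*(i:ℝ)*t))
        = (c * (1/(2:ℝ)^(2*m)) - (1/(2:ℝ)^(2*m))*(2*c^2-1))
          + (c * (1/(3:ℝ)^(2*m)) - (1/(3:ℝ)^(2*m))*(4*c^3-3*c)) := by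
      simp only [Finset.sum_range_succ, Finset.sum_range_zero]
      push_cast
      rw [e1, e2, e3, show ((0:ℝ))^(2*m) = 0 from zero_pow (by omega), one_pow]
      norm_num
    rw [hsum] at hsplit
    have hq : (16:ℝ) ≤ (2:ℝ)^(2*m) := by
      calc (16:ℝ) = 2^4 := by norm_num
        _ ≤ 2^(2*m) := pow_le_pow_right₀ one_le_two (by omega)
    have hr : (0:ℝ) < (16:ℝ)^(m-1) := by positivity
    have hqr : (2:ℝ)^(2*m) * (2:ℝ)^(2*m) = 16 * (16:ℝ)^(m-1) := by
      rw [← pow_add, show (16:ℝ) = 2^4 by norm_num, ← pow_mul, ← pow_add]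
      congr 1
      omega
    have hw : (0:ℝ) < 1/(3:ℝ)^(2*m) := by positivity
    have key := poly2' (q := (2:ℝ)^(2*m)) (r := (16:ℝ)^(m-1)) (w := 1/(3:ℝ)^(2*m))
      hc0 hc1 hT40 hT41 hq hw hr hqr
    have hchain : (c-1)*((1/(16:ℝ)^(m-1)) * (π^2/6 - 49/36)) ≤ (c-1)*(∑' i : ℕ, 1/(((i+4:ℕ)):ℝ)^(2*m)) :=
      mul_le_mul_of_nonpos_left hTmle (by linarith)
    linarith

theorem stmt14 (n : ℕ) (t : ℝ) (ht : 0 < t) (ht2 : t < 1/4) :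
    (-1:ℝ)^(n+1) * B (2*n) t < |Bnum (2*n)| * Real.cos (2*π*t) := by
  obtain ⟨hc0, hc1⟩ := cos_mem' ht ht2
  rcases Nat.eq_zero_or_pos n with rfl | hn
  · have hB : B 0 t = 1 := by
      simp [B, Polynomial.bernoulli_zero]
    have hBn : Bnum 0 = 1 := by simp [Bnum, bernoulli_zero]
    norm_num [hB, hBn]
    linarith
  · have hm : n ≠ 0 := hn.ne'
    have hfac : (((2*n)! : ℕ) : ℝ) ≠ 0 := Nat.cast_ne_zero.2 (Nat.factorial_ne_zero _)
    have hπ := Real.pi_pos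
    set c := Real.cos (2*π*t) with hcdef
    have hcore := core' hm ht ht2
    have hZ := hasSum_zeta_nat (k := n) hm
    set Zv := ((-1 : ℝ) ^ (n + 1) * (2 : ℝ) ^ (2 * n - 1) * π ^ (2 * n) * ((bernoulli (2 * n) : ℚ) : ℝ) / (2 * n)!) with hZdef
    set E := (2:ℝ)^(2*n-1) * π^(2*n) / (2*n)! with hEdef
    have hE : 0 < E := by positivity
    have h2m : (2:ℝ)^(2*n) = 2 * 2^(2*n-1) := by
      have he : 2*n = (2*n-1)+1 := by omega
      conv_lhs => rw [he, pow_succ]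
      exact mul_comm _ _
    have hBt : B (2*n) t = (Polynomial.map (algebraMap ℚ ℝ) (Polynomial.bernoulli (2*n))).eval t := by
      rw [B, Polynomial.aeval_def, ← Polynomial.eval_map]
    have eq1 : ((-1 : ℝ) ^ (n + 1) * (2 * π) ^ (2 * n) / 2 / (2 * n)! *
        (Polynomial.map (algebraMap ℚ ℝ) (Polynomial.bernoulli (2 * n))).eval t)
        = ((-1:ℝ)^(n+1) * B (2*n) t) * E := by
      rw [hBt, hEdef, mul_pow, h2m]
      field_simp
    have eq2 : c * Zv = (c * ((-1:ℝ)^(n+1) * Bnum (2*n))) * E := by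
      rw [hZdef, hEdef, Bnum]
      field_simp
    have hZpos : (0:ℝ) < Zv := by
      have h1 := le_hasSum hZ 1 (fun j _ => by positivity)
      norm_num at h1
      linarith
    have hsign : 0 < (-1:ℝ)^(n+1) * Bnum (2*n) := by
      have heq : (-1:ℝ)^(n+1) * Bnum (2*n) = Zv / E := by
        rw [hZdef, hEdef, Bnum]
        field_simp
      rw [heq]
      exact div_pos hZpos hE
    have habs : |Bnum (2*n)| = (-1:ℝ)^(n+1) * Bnum (2*n) := by
      calc |Bnum (2*n)| = |(-1:ℝ)^(n+1) * Bnum (2*n)| := by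
            rw [abs_mul, abs_pow, abs_neg, abs_one, one_pow, one_mul]
        _ = _ := abs_of_pos hsign
    rw [eq1, eq2] at hcore
    have hlt := (mul_lt_mul_iff_of_pos_right hE).mp hcore
    rw [habs]
    linarith [hlt]
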